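/- Let (V, L, ρ, *, Q) be a cyclic composition algebra and let λ, μ be invertible elements of L. Define a new product x ∗̃ y := λ(x*y) and a new form Q̃ := μQ. Then (V, L, ρ, ∗̃, Q̃) is a cyclic composition algebra if and only if μ = λ^# := ρ(λ)ρ²(λ). -/

import Mathlib

/-- A cyclic composition algebra over `(L, ρ)`: a module `V` over `L` (the scalar
action recorded as `smul`) with an `L`-valued nonsingular quadratic form `Q`
(with polar form `bQ`) and an `F`-bilinear product `mul` which is `ρ`-semilinear
in the first variable and `ρ²`-semilinear in the second, satisfying
`Q(x*y) = ρ(Q x) ρ²(Q y)` and `b_Q(x*y,z) = ρ(b_Q(y*z,x)) = ρ²(b_Q(z*x,y))`. -/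
structure CyclicComp (F : Type*) [Field F] (L : Type*) [CommRing L] [Algebra F L]
    (V : Type*) [AddCommGroup V] where
  ρ : L ≃ₐ[F] L
  rho_cube : ∀ ℓ : L, ρ (ρ (ρ ℓ)) = ℓ
  smul : L → V → V
  smul_add : ∀ (ℓ : L) (x y : V), smul ℓ (x + y) = smul ℓ x + smul ℓ y
  add_smul : ∀ (ℓ m : L) (x : V), smul (ℓ + m) x = smul ℓ x + smul m x
  mul_smul : ∀ (ℓ m : L) (x : V), smul (ℓ * m) x = smul ℓ (smul m x)
  one_smul : ∀ x : V, smul 1 x = x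
  mul : V → V → V
  mul_add_left : ∀ x y z : V, mul (x + y) z = mul x z + mul y z
  mul_add_right : ∀ x y z : V, mul x (y + z) = mul x y + mul x z
  mul_smul_left : ∀ (ℓ : L) (x y : V), mul (smul ℓ x) y = smul (ρ ℓ) (mul x y)
  mul_smul_right : ∀ (ℓ : L) (x y : V), mul x (smul ℓ y) = smul (ρ (ρ ℓ)) (mul x y)
  Q : V → L
  bQ : V → V → L
  bQ_def : ∀ x y : V, bQ x y = Q (x + y) - Q x - Q y
  Q_smul : ∀ (ℓ : L) (x : V), Q (smul ℓ x) = ℓ ^ 2 * Q x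
  bQ_smul_left : ∀ (ℓ : L) (x y : V), bQ (smul ℓ x) y = ℓ * bQ x y
  nondeg : ∀ x : V, (∀ y : V, bQ x y = 0) → x = 0
  comp : ∀ x y : V, Q (mul x y) = ρ (Q x) * ρ (ρ (Q y))
  assoc1 : ∀ x y z : V, bQ (mul x y) z = ρ (bQ (mul y z) x)
  assoc2 : ∀ x y z : V, bQ (mul x y) z = ρ (ρ (bQ (mul z x) y))

/-- For invertible `λ, μ ∈ L`, the data `x ∗̃ y := λ(x*y)`,
`Q̃ := μQ` is again a cyclic composition algebra if and only if
`μ = λ^# = ρ(λ)ρ²(λ)`.  (The hypotheses `hQu`, `hbQu` record that the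
nonsingular form `Q` on the free module `V` takes unit values.) -/
theorem cyclicComp_rescale_iff
    {F L V : Type*} [Field F] [CommRing L] [Algebra F L] [AddCommGroup V]
    (C : CyclicComp F L V)
    (hQu : ∃ x : V, IsUnit (C.Q x))
    (hbQu : ∃ x y : V, IsUnit (C.bQ x y))
    (lam mu : Lˣ) :
    (∃ C' : CyclicComp F L V, C'.ρ = C.ρ ∧ C'.smul = C.smul ∧
        (∀ x y : V, C'.mul x y = C.smul (lam : L) (C.mul x y)) ∧
        (∀ x : V, C'.Q x = (mu : L) * C.Q x)) ↔
      (mu : L) = C.ρ (lam : L) * C.ρ (C.ρ (lam : L)) := by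
  have key : ∀ x y z : V, C.bQ (C.mul x y) (C.mul x z)
      = C.ρ (C.Q x) * C.ρ (C.ρ (C.bQ y z)) := by
    intro x y z
    have h := C.comp x (y + z)
    rw [C.mul_add_right] at h
    have e1 := C.bQ_def (C.mul x y) (C.mul x z)
    have e2 := C.bQ_def y z
    have c1 := C.comp x y
    have c2 := C.comp x z
    have e2' : C.Q (y + z) = C.bQ y z + C.Q y + C.Q z := by linear_combination -e2
    rw [e2'] at h
    simp only [map_add, mul_add] at h
    linear_combination e1 + h - c1 - c2
  constructor
  · rintro ⟨C', hρ, hs, hm, hQ⟩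
    obtain ⟨x0, hx0⟩ := hQu
    obtain ⟨u, v, huv⟩ := hbQu
    have hb' : ∀ x y : V, C'.bQ x y = (mu : L) * C.bQ x y := by
      intro x y
      rw [C'.bQ_def, hQ, hQ, hQ, C.bQ_def]; ring
    -- Equation A : μ λ² = ρ(μ) ρ²(μ)
    have hA : (mu : L) * (lam : L) ^ 2
        = C.ρ (mu : L) * C.ρ (C.ρ (mu : L)) := by
      have h := C'.comp x0 x0
      simp only [hm, hQ, hρ] at h
      rw [C.Q_smul, C.comp] at h
      simp only [map_mul] at h
      have hu : IsUnit (C.ρ (C.Q x0) * C.ρ (C.ρ (C.Q x0))) :=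
        (hx0.map C.ρ).mul ((hx0.map C.ρ).map C.ρ)
      refine hu.mul_right_cancel ?_
      linear_combination h
    -- Equation B : μ λ = ρ(μ λ)
    have hB : (mu : L) * (lam : L) = C.ρ ((mu : L) * (lam : L)) := by
      have h := C'.assoc1 x0 u (C.mul x0 v)
      rw [hm, hm, hb', hb', hρ, C.bQ_smul_left, C.bQ_smul_left, map_mul, map_mul,
        ← C.assoc1] at h
      have hu : IsUnit (C.bQ (C.mul x0 u) (C.mul x0 v)) := by
        rw [key]
        exact (hx0.map C.ρ).mul ((huv.map C.ρ).map C.ρ)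
      rw [map_mul]
      refine hu.mul_right_cancel ?_
      linear_combination h
    have hB2 : C.ρ (C.ρ ((mu : L) * (lam : L))) = (mu : L) * (lam : L) := by
      rw [← hB, ← hB]
    have B1 : C.ρ (mu : L) * C.ρ (lam : L) = (mu : L) * (lam : L) := by
      rw [← map_mul]; exact hB.symm
    have B2 : C.ρ (C.ρ (mu : L)) * C.ρ (C.ρ (lam : L)) = (mu : L) * (lam : L) := by
      rw [← map_mul, ← map_mul]; exact hB2
    have hcu : IsUnit ((mu : L) * (lam : L) ^ 2) :=
      mu.isUnit.mul (lam.isUnit.pow 2)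
    refine hcu.mul_left_cancel ?_
    linear_combination (-(C.ρ (lam : L) * C.ρ (C.ρ (lam : L)))) * hA
      - (C.ρ (C.ρ (mu : L)) * C.ρ (C.ρ (lam : L))) * B1 - ((mu : L) * (lam : L)) * B2
  · intro hmu
    refine ⟨{ ρ := C.ρ
              rho_cube := C.rho_cube
              smul := C.smul
              smul_add := C.smul_add
              add_smul := C.add_smul
              mul_smul := C.mul_smul
              one_smul := C.one_smul
              mul := fun x y => C.smul (lam : L) (C.mul x y)
              mul_add_left := ?_
              mul_add_right := ?_
              mul_smul_left := ?_
              mul_smul_right := ?_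
              Q := fun x => (mu : L) * C.Q x
              bQ := fun x y => (mu : L) * C.bQ x y
              bQ_def := ?_
              Q_smul := ?_
              bQ_smul_left := ?_
              nondeg := ?_
              comp := ?_
              assoc1 := ?_
              assoc2 := ?_ },
      rfl, rfl, fun x y => rfl, fun x => rfl⟩
    · intro x y z; rw [C.mul_add_left, C.smul_add]
    · intro x y z; rw [C.mul_add_right, C.smul_add]
    · intro ℓ x y
      rw [C.mul_smul_left, ← C.mul_smul, ← C.mul_smul, mul_comm]
    · intro ℓ x y
      rw [C.mul_smul_right, ← C.mul_smul, ← C.mul_smul, mul_comm]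
    · intro x y; rw [C.bQ_def]; ring
    · intro ℓ x; rw [C.Q_smul]; ring
    · intro ℓ x y; rw [C.bQ_smul_left]; ring
    · intro x hx
      refine C.nondeg x fun y => ?_
      have := hx y
      exact (IsUnit.mul_right_eq_zero mu.isUnit).mp this
    · intro x y
      simp only [C.Q_smul, C.comp, hmu, map_mul, C.rho_cube]
      ring
    · intro x y z
      simp only [C.bQ_smul_left, C.assoc1 x y z, hmu, map_mul, C.rho_cube]
      ring
    · intro x y z
      simp only [C.bQ_smul_left, C.assoc2 x y z, hmu, map_mul, C.rho_cube]
      ring
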